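/- arXiv:2212.03362 — 2 statements merged into one kernel-verified Lean document; each statement's English description precedes it below -/
import Mathlib

section
/- The total variation distance between a Poisson distribution with mean θ and a Binomial distribution with parameters r and p satisfies d_TV(Poi(θ), Bin(r,p)) ≤ θ²/r + |rp − θ|. -/
/-- Poisson probability mass function with mean `θ`, on the nonnegative integers. -/
noncomputable def poissonPMF (θ : ℝ) (k : ℕ) : ℝ :=
  Real.exp (-θ) * θ ^ k / (Nat.factorial k)

/-- Binomial probability mass function with `r` trials and success probability `p`. -/
noncomputable def binomialPMF (r : ℕ) (p : ℝ) (k : ℕ) : ℝ :=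
  (r.choose k : ℝ) * p ^ k * (1 - p) ^ (r - k)

/-- Total variation distance between two (sub)probability mass functions on `ℕ`. -/
noncomputable def tvDist (f g : ℕ → ℝ) : ℝ :=
  (1 / 2) * ∑' k : ℕ, |f k - g k|

/-! ### Auxiliary definitions and lemmas -/

/-- Bernoulli pmf. -/
noncomputable def bernPMF (p : ℝ) (k : ℕ) : ℝ :=
  if k = 0 then 1 - p else if k = 1 then p else 0

/-- Convolution of two sequences. -/
noncomputable def convSeq (f g : ℕ → ℝ) (n : ℕ) : ℝ :=
  ∑ k ∈ Finset.range (n + 1), f k * g (n - k)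

lemma poissonPMF_nonneg {θ : ℝ} (hθ : 0 ≤ θ) (k : ℕ) : 0 ≤ poissonPMF θ k := by
  unfold poissonPMF
  positivity

lemma hasSum_poissonPMF {θ : ℝ} (hθ : 0 ≤ θ) : HasSum (poissonPMF θ) 1 := by
  have h := ProbabilityTheory.poissonPMFRealSum ⟨θ, hθ⟩
  exact h

lemma summable_poissonPMF {θ : ℝ} (hθ : 0 ≤ θ) : Summable (poissonPMF θ) :=
  (hasSum_poissonPMF hθ).summable

lemma tsum_poissonPMF {θ : ℝ} (hθ : 0 ≤ θ) : ∑' k, poissonPMF θ k = 1 :=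
  (hasSum_poissonPMF hθ).tsum_eq

lemma binomialPMF_eq_zero {r : ℕ} {p : ℝ} {k : ℕ} (hk : k ∉ Finset.range (r + 1)) :
    binomialPMF r p k = 0 := by
  have : r < k := by
    simpa [Finset.mem_range, Nat.lt_succ_iff, not_le] using hk
  simp [binomialPMF, Nat.choose_eq_zero_of_lt this]

lemma binomialPMF_nonneg {r : ℕ} {p : ℝ} (hp0 : 0 ≤ p) (hp1 : p ≤ 1) (k : ℕ) :
    0 ≤ binomialPMF r p k := by
  have h1 : (0:ℝ) ≤ 1 - p := by linarith
  unfold binomialPMF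
  positivity

lemma summable_binomialPMF (r : ℕ) (p : ℝ) : Summable (binomialPMF r p) :=
  summable_of_ne_finset_zero (s := Finset.range (r + 1)) fun _ hk => binomialPMF_eq_zero hk

lemma tsum_binomialPMF (r : ℕ) (p : ℝ) : ∑' k, binomialPMF r p k = 1 := by
  rw [tsum_eq_sum (s := Finset.range (r + 1)) fun _ hk => binomialPMF_eq_zero hk]
  have h := add_pow p (1 - p) r
  simp only [add_sub_cancel, one_pow] at h
  rw [h]
  apply Finset.sum_congr rfl
  intro k _
  unfold binomialPMF
  ring

lemma bernPMF_nonneg {p : ℝ} (hp0 : 0 ≤ p) (hp1 : p ≤ 1) (k : ℕ) : 0 ≤ bernPMF p k := by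
  unfold bernPMF
  split_ifs <;> linarith

lemma bernPMF_eq_zero {p : ℝ} {k : ℕ} (hk : k ∉ Finset.range 2) : bernPMF p k = 0 := by
  have h0 : k ≠ 0 := by intro h; subst h; simp at hk
  have h1 : k ≠ 1 := by intro h; subst h; simp at hk
  simp [bernPMF, h0, h1]

lemma summable_bernPMF (p : ℝ) : Summable (bernPMF p) :=
  summable_of_ne_finset_zero (s := Finset.range 2) fun _ hk => bernPMF_eq_zero hk

lemma tsum_bernPMF (p : ℝ) : ∑' k, bernPMF p k = 1 := by
  rw [tsum_eq_sum (s := Finset.range 2) fun _ hk => bernPMF_eq_zero hk]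
  simp [Finset.sum_range_succ, bernPMF]

/-! ### Convolution lemmas -/

lemma abs_convSeq_le (u v : ℕ → ℝ) (k : ℕ) :
    |convSeq u v k| ≤ convSeq (fun j => |u j|) (fun j => |v j|) k := by
  simpa [convSeq, abs_mul] using
    Finset.abs_sum_le_sum_abs (fun j => u j * v (k - j)) (Finset.range (k + 1))

lemma summable_convSeq_abs {u v : ℕ → ℝ} (hu : Summable fun k => |u k|)
    (hv : Summable fun k => |v k|) :
    Summable (convSeq (fun j => |u j|) (fun j => |v j|)) := by
  have hu' : Summable fun k => ‖|u k|‖ := by simpa [Real.norm_eq_abs, abs_abs] using hu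
  have hv' : Summable fun k => ‖|v k|‖ := by simpa [Real.norm_eq_abs, abs_abs] using hv
  have := summable_norm_sum_mul_range_of_summable_norm hu' hv'
  exact this.of_norm

lemma summable_abs_convSeq {u v : ℕ → ℝ} (hu : Summable fun k => |u k|)
    (hv : Summable fun k => |v k|) :
    Summable fun k => |convSeq u v k| :=
  Summable.of_nonneg_of_le (fun k => abs_nonneg _) (abs_convSeq_le u v)
    (summable_convSeq_abs hu hv)

lemma tsum_abs_convSeq_le {u v : ℕ → ℝ} (hu : Summable fun k => |u k|)
    (hv : Summable fun k => |v k|) :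
    ∑' k, |convSeq u v k| ≤ (∑' k, |u k|) * (∑' k, |v k|) := by
  have hu' : Summable fun k => ‖|u k|‖ := by simpa [Real.norm_eq_abs, abs_abs] using hu
  have hv' : Summable fun k => ‖|v k|‖ := by simpa [Real.norm_eq_abs, abs_abs] using hv
  calc ∑' k, |convSeq u v k|
      ≤ ∑' k, convSeq (fun j => |u j|) (fun j => |v j|) k :=
        Summable.tsum_le_tsum (abs_convSeq_le u v) (summable_abs_convSeq hu hv)
          (summable_convSeq_abs hu hv)
    _ = (∑' k, |u k|) * (∑' k, |v k|) := by
        rw [tsum_mul_tsum_eq_tsum_sum_range_of_summable_norm hu' hv']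
        rfl

lemma convSeq_sub_decomp (F G H₁ H₂ : ℕ → ℝ) (k : ℕ) :
    convSeq F H₁ k - convSeq G H₂ k =
      convSeq (fun j => F j - G j) H₁ k + convSeq G (fun j => H₁ j - H₂ j) k := by
  simp only [convSeq, ← Finset.sum_add_distrib, ← Finset.sum_sub_distrib]
  apply Finset.sum_congr rfl
  intro j _
  ring

lemma step_bound {F G H₁ H₂ : ℕ → ℝ} (hF : Summable fun k => |F k|)
    (hG : Summable fun k => |G k|) (hH₁ : Summable fun k => |H₁ k|)
    (hH₂ : Summable fun k => |H₂ k|) :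
    ∑' k, |convSeq F H₁ k - convSeq G H₂ k| ≤
      (∑' k, |F k - G k|) * (∑' k, |H₁ k|) + (∑' k, |G k|) * (∑' k, |H₁ k - H₂ k|) := by
  have hFG : Summable fun k => |F k - G k| := (hF.of_abs.sub hG.of_abs).abs
  have hH₁₂ : Summable fun k => |H₁ k - H₂ k| := (hH₁.of_abs.sub hH₂.of_abs).abs
  have sA : Summable fun k => |convSeq (fun j => F j - G j) H₁ k| :=
    summable_abs_convSeq hFG hH₁
  have sB : Summable fun k => |convSeq G (fun j => H₁ j - H₂ j) k| :=
    summable_abs_convSeq hG hH₁₂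
  have hpt : ∀ k, |convSeq F H₁ k - convSeq G H₂ k| ≤
      |convSeq (fun j => F j - G j) H₁ k| + |convSeq G (fun j => H₁ j - H₂ j) k| := by
    intro k
    rw [convSeq_sub_decomp]
    exact abs_add_le _ _
  calc ∑' k, |convSeq F H₁ k - convSeq G H₂ k|
      ≤ ∑' k, (|convSeq (fun j => F j - G j) H₁ k| + |convSeq G (fun j => H₁ j - H₂ j) k|) :=
        Summable.tsum_le_tsum hpt
          (Summable.of_nonneg_of_le (fun k => abs_nonneg _) hpt (sA.add sB)) (sA.add sB)
    _ = (∑' k, |convSeq (fun j => F j - G j) H₁ k|)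
        + ∑' k, |convSeq G (fun j => H₁ j - H₂ j) k| := Summable.tsum_add sA sB
    _ ≤ (∑' k, |F k - G k|) * (∑' k, |H₁ k|) + (∑' k, |G k|) * (∑' k, |H₁ k - H₂ k|) :=
        add_le_add (tsum_abs_convSeq_le hFG hH₁) (tsum_abs_convSeq_le hG hH₁₂)

/-! ### Structure lemmas -/

lemma poissonPMF_conv (a b : ℝ) :
    convSeq (poissonPMF a) (poissonPMF b) = poissonPMF (a + b) := by
  funext k
  unfold convSeq poissonPMF
  rw [add_pow, neg_add, Real.exp_add, mul_div_assoc, Finset.sum_div, Finset.mul_sum]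
  apply Finset.sum_congr rfl
  intro j hj
  have hj' : j ≤ k := Nat.lt_succ_iff.mp (Finset.mem_range.mp hj)
  have key : ((k.choose j : ℕ) : ℝ) * (j.factorial : ℝ) * ((k - j).factorial : ℝ)
      = (k.factorial : ℝ) := by
    exact_mod_cast Nat.choose_mul_factorial_mul_factorial hj'
  have h1 : (j.factorial : ℝ) ≠ 0 := Nat.cast_ne_zero.mpr j.factorial_ne_zero
  have h2 : ((k - j).factorial : ℝ) ≠ 0 := Nat.cast_ne_zero.mpr (k - j).factorial_ne_zero
  have h3 : (k.factorial : ℝ) ≠ 0 := Nat.cast_ne_zero.mpr k.factorial_ne_zero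
  field_simp
  linear_combination (-(a ^ j * b ^ (k - j))) * key

lemma binomialPMF_succ (n : ℕ) (p : ℝ) :
    binomialPMF (n + 1) p = convSeq (binomialPMF n p) (bernPMF p) := by
  funext k
  cases k with
  | zero =>
    simp [convSeq, binomialPMF, bernPMF]
    ring
  | succ k =>
    have hconv : convSeq (binomialPMF n p) (bernPMF p) (k + 1)
        = binomialPMF n p (k + 1) * (1 - p) + binomialPMF n p k * p := by
      unfold convSeq
      rw [Finset.sum_range_succ, Finset.sum_range_succ]
      have hz : ∀ j ∈ Finset.range k, binomialPMF n p j * bernPMF p (k + 1 - j) = 0 := by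
        intro j hj
        have hj' : j < k := Finset.mem_range.mp hj
        have h0 : k + 1 - j ≠ 0 := by omega
        have h1 : k + 1 - j ≠ 1 := by omega
        simp [bernPMF, h0, h1]
      rw [Finset.sum_eq_zero hz]
      have e1 : k + 1 - k = 1 := by omega
      simp [e1, bernPMF]
      ring
    rw [hconv]
    by_cases hk : k + 1 ≤ n
    · unfold binomialPMF
      have hc : (((n + 1).choose (k + 1) : ℕ) : ℝ)
          = ((n.choose k : ℕ) : ℝ) + ((n.choose (k + 1) : ℕ) : ℝ) := by
        exact_mod_cast congrArg (Nat.cast : ℕ → ℝ) (Nat.choose_succ_succ n k)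
      have h0 : n + 1 - (k + 1) = (n - (k + 1)) + 1 := by omega
      have h1 : n - k = (n - (k + 1)) + 1 := by omega
      rw [h0, h1, hc]
      ring
    · by_cases hk2 : k = n
      · subst hk2
        unfold binomialPMF
        simp [Nat.choose_succ_self, Nat.sub_self]
        ring
      · have h1 : n < k := by omega
        unfold binomialPMF
        rw [Nat.choose_eq_zero_of_lt (by omega : n + 1 < k + 1),
          Nat.choose_eq_zero_of_lt (by omega : n < k + 1),
          Nat.choose_eq_zero_of_lt h1]
        simp

/-! ### Total-variation type bounds -/

lemma tsum_abs_poissonPMF {θ : ℝ} (hθ : 0 ≤ θ) : ∑' k, |poissonPMF θ k| = 1 := by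
  rw [show (fun k => |poissonPMF θ k|) = poissonPMF θ from
    funext fun k => abs_of_nonneg (poissonPMF_nonneg hθ k)]
  exact tsum_poissonPMF hθ

lemma tsum_abs_binomialPMF {r : ℕ} {p : ℝ} (hp0 : 0 ≤ p) (hp1 : p ≤ 1) :
    ∑' k, |binomialPMF r p k| = 1 := by
  rw [show (fun k => |binomialPMF r p k|) = binomialPMF r p from
    funext fun k => abs_of_nonneg (binomialPMF_nonneg hp0 hp1 k)]
  exact tsum_binomialPMF r p

lemma tsum_abs_bernPMF {p : ℝ} (hp0 : 0 ≤ p) (hp1 : p ≤ 1) : ∑' k, |bernPMF p k| = 1 := by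
  rw [show (fun k => |bernPMF p k|) = bernPMF p from
    funext fun k => abs_of_nonneg (bernPMF_nonneg hp0 hp1 k)]
  exact tsum_bernPMF p

lemma tsum_abs_bern_sub_bern (p q : ℝ) :
    ∑' k, |bernPMF p k - bernPMF q k| = 2 * |p - q| := by
  have hz : ∀ k ∉ Finset.range 2, |bernPMF p k - bernPMF q k| = 0 := by
    intro k hk
    rw [bernPMF_eq_zero hk, bernPMF_eq_zero hk]
    simp
  rw [tsum_eq_sum hz]
  simp [Finset.sum_range_succ, bernPMF]
  rw [abs_sub_comm q p]
  ring

/-- Le Cam's key single-trial estimate. -/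
lemma tsum_abs_poisson_sub_bern {q : ℝ} (hq0 : 0 ≤ q) (hq1 : q ≤ 1) :
    ∑' k, |poissonPMF q k - bernPMF q k| ≤ 2 * q ^ 2 := by
  set g : ℕ → ℝ := fun k => |poissonPMF q k - bernPMF q k| with hg_def
  have hg : Summable g := ((summable_poissonPMF hq0).sub (summable_bernPMF q)).abs
  have hg1 : Summable fun k => g (k + 1) := (summable_nat_add_iff 1).mpr hg
  have hpoi : Summable (poissonPMF q) := summable_poissonPMF hq0
  have hpoi1 : Summable fun k => poissonPMF q (k + 1) := (summable_nat_add_iff 1).mpr hpoi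
  have hdecomp : ∑' k, g k = g 0 + g 1 + ∑' k, g (k + 2) := by
    rw [Summable.tsum_eq_zero_add hg, Summable.tsum_eq_zero_add hg1, ← add_assoc]
  have htail_eq : ∑' (k : ℕ), g (k + 2) = ∑' (k : ℕ), poissonPMF q (k + 2) := by
    apply tsum_congr
    intro k
    have hb : bernPMF q (k + 2) = 0 := by simp [bernPMF]
    rw [hg_def]
    simp only [hb, sub_zero]
    exact abs_of_nonneg (poissonPMF_nonneg hq0 _)
  have hptail : ∑' (k : ℕ), poissonPMF q (k + 2)
      = 1 - poissonPMF q 0 - poissonPMF q 1 := by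
    have h1 : ∑' k, poissonPMF q k = poissonPMF q 0 + ∑' k, poissonPMF q (k + 1) :=
      Summable.tsum_eq_zero_add hpoi
    have h2 : ∑' k, poissonPMF q (k + 1)
        = poissonPMF q 1 + ∑' k, poissonPMF q (k + 2) := Summable.tsum_eq_zero_add hpoi1
    have h3 := tsum_poissonPMF hq0
    rw [h3] at h1
    linarith [h1, h2]
  have hexp : 1 - q ≤ Real.exp (-q) := by
    have := Real.add_one_le_exp (-q)
    linarith
  have hexp1 : Real.exp (-q) ≤ 1 := Real.exp_le_one_iff.mpr (by linarith)
  have hp0 : poissonPMF q 0 = Real.exp (-q) := by simp [poissonPMF]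
  have hp1 : poissonPMF q 1 = Real.exp (-q) * q := by simp [poissonPMF]
  have hb0 : bernPMF q 0 = 1 - q := by simp [bernPMF]
  have hb1 : bernPMF q 1 = q := by simp [bernPMF]
  have hg0 : g 0 = Real.exp (-q) - (1 - q) := by
    show |poissonPMF q 0 - bernPMF q 0| = _
    rw [hp0, hb0]
    exact abs_of_nonneg (by linarith)
  have hg1v : g 1 = q - Real.exp (-q) * q := by
    show |poissonPMF q 1 - bernPMF q 1| = _
    rw [hp1, hb1, abs_of_nonpos (by nlinarith)]
    ring
  rw [hdecomp, htail_eq, hptail, hg0, hg1v, hp0, hp1]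
  nlinarith [Real.exp_pos (-q)]

/-- Le Cam's bound. -/
lemma lecam {q : ℝ} (hq0 : 0 ≤ q) (hq1 : q ≤ 1) (n : ℕ) :
    ∑' k, |poissonPMF (n * q) k - binomialPMF n q k| ≤ 2 * n * q ^ 2 := by
  induction n with
  | zero =>
    have : ∀ k, poissonPMF ((0 : ℕ) * q) k = binomialPMF 0 q k := by
      intro k
      cases k with
      | zero => simp [poissonPMF, binomialPMF]
      | succ k => simp [poissonPMF, binomialPMF]
    simp only [this]
    simp
  | succ n ih =>
    have hnq : (0:ℝ) ≤ n * q := by positivity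
    have hkey : poissonPMF ((n + 1 : ℕ) * q)
        = convSeq (poissonPMF (n * q)) (poissonPMF q) := by
      rw [poissonPMF_conv]
      congr 1
      push_cast
      ring
    rw [hkey, binomialPMF_succ]
    have hstep := step_bound (F := poissonPMF (n * q)) (G := binomialPMF n q)
      (H₁ := poissonPMF q) (H₂ := bernPMF q)
      ((summable_poissonPMF hnq).abs) ((summable_binomialPMF n q).abs)
      ((summable_poissonPMF hq0).abs) ((summable_bernPMF q).abs)
    rw [tsum_abs_poissonPMF hq0, tsum_abs_binomialPMF hq0 hq1] at hstep
    have h1 := tsum_abs_poisson_sub_bern hq0 hq1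
    have h2 : (0:ℝ) ≤ ∑' k, |poissonPMF (n * q) k - binomialPMF n q k| :=
      tsum_nonneg fun k => abs_nonneg _
    calc ∑' k, |convSeq (poissonPMF (n * q)) (poissonPMF q) k
          - convSeq (binomialPMF n q) (bernPMF q) k|
        ≤ (∑' k, |poissonPMF (n * q) k - binomialPMF n q k|) * 1
          + 1 * ∑' k, |poissonPMF q k - bernPMF q k| := hstep
      _ ≤ 2 * n * q ^ 2 * 1 + 1 * (2 * q ^ 2) := by
          apply add_le_add
          · exact mul_le_mul_of_nonneg_right ih (by norm_num)
          · linarith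
      _ = 2 * (n + 1 : ℕ) * q ^ 2 := by push_cast; ring

/-- Lipschitz bound for binomials. -/
lemma binom_lipschitz {p q : ℝ} (hp0 : 0 ≤ p) (hp1 : p ≤ 1) (hq0 : 0 ≤ q) (hq1 : q ≤ 1)
    (n : ℕ) :
    ∑' k, |binomialPMF n p k - binomialPMF n q k| ≤ 2 * n * |p - q| := by
  induction n with
  | zero =>
    have : ∀ k, binomialPMF 0 p k = binomialPMF 0 q k := by
      intro k
      cases k with
      | zero => simp [binomialPMF]
      | succ k => simp [binomialPMF]
    simp only [this]
    simp
  | succ n ih =>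
    rw [binomialPMF_succ, binomialPMF_succ]
    have hstep := step_bound (F := binomialPMF n p) (G := binomialPMF n q)
      (H₁ := bernPMF p) (H₂ := bernPMF q)
      ((summable_binomialPMF n p).abs) ((summable_binomialPMF n q).abs)
      ((summable_bernPMF p).abs) ((summable_bernPMF q).abs)
    rw [tsum_abs_bernPMF hp0 hp1, tsum_abs_bern_sub_bern p q,
      tsum_abs_binomialPMF hq0 hq1] at hstep
    calc ∑' k, |convSeq (binomialPMF n p) (bernPMF p) k
          - convSeq (binomialPMF n q) (bernPMF q) k|
        ≤ (∑' k, |binomialPMF n p k - binomialPMF n q k|) * 1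
          + 1 * (2 * |p - q|) := hstep
      _ ≤ 2 * n * |p - q| * 1 + 1 * (2 * |p - q|) := by
          apply add_le_add_left
          exact mul_le_mul_of_nonneg_right ih (by norm_num)
      _ = 2 * (n + 1 : ℕ) * |p - q| := by push_cast; ring

/-- `d_TV(Poi(θ), Bin(r,p)) ≤ θ²/r + |rp − θ|`. -/
theorem tv_poisson_binomial (θ : ℝ) (hθ : 0 ≤ θ) (r : ℕ) (hr : 0 < r)
    (p : ℝ) (hp0 : 0 ≤ p) (hp1 : p ≤ 1) :
    tvDist (poissonPMF θ) (binomialPMF r p) ≤ θ ^ 2 / r + |r * p - θ| := by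
  have hr' : (0:ℝ) < r := by exact_mod_cast hr
  have habs : (0:ℝ) ≤ |(r:ℝ) * p - θ| := abs_nonneg _
  have hSpoi : Summable fun k => |poissonPMF θ k| := (summable_poissonPMF hθ).abs
  have hSbin : Summable fun k => |binomialPMF r p k| := (summable_binomialPMF r p).abs
  unfold tvDist
  by_cases hcase : θ ≤ r
  · -- main case : compare through Bin(r, θ/r)
    set q : ℝ := θ / r with hq_def
    have hq0 : 0 ≤ q := by positivity
    have hq1 : q ≤ 1 := by
      rw [div_le_one hr']
      exact hcase
    have hrne : (r:ℝ) ≠ 0 := ne_of_gt hr'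
    have hrq : (r:ℝ) * q = θ := by
      rw [hq_def]
      field_simp
    have hS1 : ∑' k, |poissonPMF θ k - binomialPMF r q k| ≤ 2 * (θ ^ 2 / r) := by
      have := lecam hq0 hq1 r
      rw [hrq] at this
      calc ∑' k, |poissonPMF θ k - binomialPMF r q k| ≤ 2 * r * q ^ 2 := this
        _ = 2 * (θ ^ 2 / r) := by
            rw [hq_def, div_pow]
            field_simp
    have hS2 : ∑' k, |binomialPMF r q k - binomialPMF r p k| ≤ 2 * |(r:ℝ) * p - θ| := by
      have := binom_lipschitz hq0 hq1 hp0 hp1 r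
      calc ∑' k, |binomialPMF r q k - binomialPMF r p k| ≤ 2 * r * |q - p| := this
        _ = 2 * |(r:ℝ) * p - θ| := by
            have key : (r:ℝ) * |q - p| = |(r:ℝ) * p - θ| :=
              calc (r:ℝ) * |q - p| = |(r:ℝ) * (q - p)| := by
                    rw [abs_mul, abs_of_pos hr']
                _ = |(r:ℝ) * p - θ| := by rw [mul_sub, hrq, abs_sub_comm]
            rw [mul_assoc, key]
    -- triangle inequality
    have hSq : Summable fun k => |binomialPMF r q k| := (summable_binomialPMF r q).abs
    have s1 : Summable fun k => |poissonPMF θ k - binomialPMF r q k| :=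
      (hSpoi.of_abs.sub hSq.of_abs).abs
    have s2 : Summable fun k => |binomialPMF r q k - binomialPMF r p k| :=
      (hSq.of_abs.sub hSbin.of_abs).abs
    have htri : ∑' k, |poissonPMF θ k - binomialPMF r p k| ≤
        (∑' k, |poissonPMF θ k - binomialPMF r q k|)
        + ∑' k, |binomialPMF r q k - binomialPMF r p k| := by
      rw [← Summable.tsum_add s1 s2]
      refine Summable.tsum_le_tsum (fun k => ?_)
        ((hSpoi.of_abs.sub hSbin.of_abs).abs) (s1.add s2)
      calc |poissonPMF θ k - binomialPMF r p k|
          = |(poissonPMF θ k - binomialPMF r q k) + (binomialPMF r q k - binomialPMF r p k)| := by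
            congr 1
            ring
        _ ≤ _ := abs_add_le _ _
    have : ∑' k, |poissonPMF θ k - binomialPMF r p k| ≤
        2 * (θ ^ 2 / r) + 2 * |(r:ℝ) * p - θ| := le_trans htri (add_le_add hS1 hS2)
    linarith
  · -- trivial case : θ > r, so θ²/r ≥ r ≥ 1 ≥ tv
    push_neg at hcase
    have hbound : ∑' k, |poissonPMF θ k - binomialPMF r p k| ≤ 2 := by
      have hpt : ∀ k, |poissonPMF θ k - binomialPMF r p k| ≤
          poissonPMF θ k + binomialPMF r p k := by
        intro k
        calc |poissonPMF θ k - binomialPMF r p k| ≤ |poissonPMF θ k| + |binomialPMF r p k| :=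
            abs_sub _ _
          _ = poissonPMF θ k + binomialPMF r p k := by
            rw [abs_of_nonneg (poissonPMF_nonneg hθ k),
              abs_of_nonneg (binomialPMF_nonneg hp0 hp1 k)]
      have hsum : Summable fun k => poissonPMF θ k + binomialPMF r p k :=
        (summable_poissonPMF hθ).add (summable_binomialPMF r p)
      calc ∑' k, |poissonPMF θ k - binomialPMF r p k|
          ≤ ∑' k, (poissonPMF θ k + binomialPMF r p k) :=
            Summable.tsum_le_tsum hpt ((hSpoi.of_abs.sub hSbin.of_abs).abs) hsum
        _ = 2 := by
            rw [Summable.tsum_add (summable_poissonPMF hθ) (summable_binomialPMF r p),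
              tsum_poissonPMF hθ, tsum_binomialPMF]
            norm_num
    have h1r : (1:ℝ) ≤ r := by exact_mod_cast hr
    have hθ1 : (1:ℝ) ≤ θ ^ 2 / r := by
      rw [le_div_iff₀ hr']
      nlinarith
    linarith
end

section
/- Let (x_n) and (u_n) be sequences of nonnegative and real numbers respectively, and suppose there are constants C > 0, ρ ∈ (0,1) with u_{n+1} ≤ ρ·|u_n| + C·x_n², and x_{n+1} ≥ θ·x_n for some θ > 0 with ρ < θ², and x_n > 0 for all n. Then there exists a constant C' > 0 and N such that |u_n| ≤ C'·x_n² for all n ≥ N. -/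
/-- Iteration lemma: if `|u_{n+1}| ≤ ρ|u_n| + C x_n²`, `x_{n+1} ≥ θ x_n > 0` and
`ρ < θ²`, then `|u_n| ≤ C' x_n²` eventually. -/
theorem iteration_lemma (x : ℕ → ℝ) (u : ℕ → ℝ)
    (hx_nonneg : ∀ n, 0 ≤ x n) (hx_pos : ∀ n, 0 < x n)
    (C : ℝ) (hC : 0 < C) (ρ : ℝ) (hρ0 : 0 < ρ) (hρ1 : ρ < 1)
    (θ : ℝ) (hθ : 0 < θ) (hρθ : ρ < θ ^ 2)
    (hu : ∀ n, |u (n + 1)| ≤ ρ * |u n| + C * (x n) ^ 2)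
    (hxrec : ∀ n, x (n + 1) ≥ θ * x n) :
    ∃ C' > 0, ∃ N : ℕ, ∀ n ≥ N, |u n| ≤ C' * (x n) ^ 2 := by
  have hθρ : 0 < θ ^ 2 - ρ := by linarith
  set M₀ : ℝ := C / (θ ^ 2 - ρ) with hM₀
  have hM₀pos : 0 < M₀ := div_pos hC hθρ
  set M : ℝ := max (|u 0| / (x 0) ^ 2) M₀ with hM
  have hMpos : 0 < M := lt_of_lt_of_le hM₀pos (le_max_right _ _)
  refine ⟨M, hMpos, 0, fun n _ => ?_⟩
  induction n with
  | zero =>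
      have hx0 : 0 < (x 0) ^ 2 := pow_pos (hx_pos 0) 2
      have : |u 0| / (x 0) ^ 2 ≤ M := le_max_left _ _
      calc |u 0| = |u 0| / (x 0) ^ 2 * (x 0) ^ 2 := by rw [div_mul_cancel₀ _ hx0.ne']
        _ ≤ M * (x 0) ^ 2 := by nlinarith
  | succ n ih =>
      have ih' := ih (Nat.zero_le n)
      have h1 : |u (n + 1)| ≤ ρ * (M * (x n) ^ 2) + C * (x n) ^ 2 := by
        have := hu n
        nlinarith
      have hxn : 0 < x n := hx_pos n
      have hx2 : θ * x n ≤ x (n + 1) := hxrec n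
      have hx2sq : θ ^ 2 * (x n) ^ 2 ≤ (x (n + 1)) ^ 2 := by nlinarith [mul_pos hθ hxn, sq_nonneg (x (n+1) - θ * x n)]
      have hMM₀ : M₀ ≤ M := le_max_right _ _
      have hCle : C ≤ (θ ^ 2 - ρ) * M := by
        rw [hM₀] at hMM₀
        calc C = (θ ^ 2 - ρ) * M₀ := by rw [hM₀]; field_simp [hθρ.ne']
          _ ≤ (θ ^ 2 - ρ) * M := by nlinarith
      calc |u (n + 1)| ≤ ρ * (M * (x n) ^ 2) + C * (x n) ^ 2 := h1
        _ ≤ θ ^ 2 * M * (x n) ^ 2 := by nlinarith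
        _ ≤ M * (x (n + 1)) ^ 2 := by nlinarith
end
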